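/- Let G be an (m+1)×m matrix over F_q whose full set of row indices is a circuit, and define B(i,j) = { v ∈ F_q^m : (row i of G)·v = j }. Fix i ∈ {1,…,m} and values l_1,…,l_{i-1},l_{i+1},…,l_m ∈ F_q, and let E = B(1,l_1) ∩ ⋯ ∩ B(i-1,l_{i-1}) ∩ B(i+1,l_{i+1}) ∩ ⋯ ∩ B(m,l_m) (a set of size q). Then the q elements of E lie in q distinct blocks of the parallel class { B(m+1, j) : j ∈ F_q }, i.e. the map sending v ∈ E to (row m+1 of G)·v is injective. -/

import Mathlib

/-- Let G be an (m+1)×m matrix over F_q whose full row-index set is a circuit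
(rows dependent, every m rows independent). Fix i ∈ {1,…,m} and values
l_k ∈ F_q for k ≠ i, and let E be the intersection of the blocks
`B(k, l_k)` for k ≠ i, k ≤ m. Then the elements of E lie in distinct blocks of
the parallel class of row m+1: the map `v ↦ (row m+1 of G)·v` is injective
on E. -/
theorem stmt_12 (F : Type*) [Field F] [Fintype F] (m : ℕ)
    (G : Matrix (Fin (m + 1)) (Fin m) F)
    (hdep : ¬ LinearIndependent F G)
    (hind : ∀ i : Fin (m + 1),
      LinearIndependent F (fun k : {x : Fin (m + 1) // x ≠ i} => G k))
    (i : Fin m) (l : Fin m → F) :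
    Set.InjOn (fun v : Fin m → F => dotProduct (G (Fin.last m)) v)
      {v : Fin m → F |
        ∀ k : Fin m, k ≠ i → dotProduct (G k.castSucc) v = l k} := by
  intro v hv w hw hvw
  set u : Fin m → F := v - w with hu
  -- every row except i.castSucc is orthogonal to u
  have horth : ∀ j : Fin (m + 1), j ≠ i.castSucc → dotProduct (G j) u = 0 := by
    intro j hj
    have hsub : ∀ j : Fin (m + 1),
        dotProduct (G j) u = dotProduct (G j) v - dotProduct (G j) w := by
      intro j
      simp [hu, dotProduct_sub]
    induction j using Fin.lastCases with
    | last => rw [hsub]; simp only at hvw; rw [hvw, sub_self]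
    | cast k =>
        have hk : k ≠ i := fun h => hj (by rw [h])
        rw [hsub, hv k hk, hw k hk, sub_self]
  -- the rows other than i.castSucc span the whole space
  have hli := hind i.castSucc
  have hcard : Fintype.card {x : Fin (m + 1) // x ≠ i.castSucc} = m := by
    simp [Fintype.card_subtype_compl]
  haveI : Nonempty {x : Fin (m + 1) // x ≠ i.castSucc} :=
    ⟨⟨Fin.last m, (Fin.castSucc_lt_last i).ne'⟩⟩
  have hspan : Submodule.span F
      (Set.range (fun k : {x : Fin (m + 1) // x ≠ i.castSucc} => G k)) = ⊤ := by
    apply hli.span_eq_top_of_card_eq_finrank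
    rw [hcard]
    simp [Module.finrank_pi]
  -- the linear functional x ↦ x ⬝ᵥ u vanishes on a spanning set, hence is 0
  let f : (Fin m → F) →ₗ[F] F :=
    { toFun := fun x => dotProduct x u
      map_add' := fun x y => add_dotProduct x y u
      map_smul' := fun c x => smul_dotProduct c x u }
  have hf : f = 0 := by
    apply LinearMap.ext_on hspan
    rintro x ⟨⟨j, hj⟩, rfl⟩
    exact horth j hj
  have huz : u = 0 := by
    funext k
    have := congrFun (congrArg (fun g => g.toFun) hf) (Pi.single k 1)
    simpa [f, single_dotProduct] using this
  have := sub_eq_zero.mp (hu ▸ huz : v - w = 0)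
  exact this
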